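/- Let θ be a categorical distribution on a finite nonempty set X. If θ has a unique maximizer (i.e., exactly one x ∈ X with θ(x) = max_{y∈X} θ(y)), then H(T(θ,α)) tends to 0 as α → +∞; if θ has a unique minimizer, then H(T(θ,α)) tends to 0 as α → −∞. -/

import Mathlib

open Real BigOperators
open scoped Classical

variable {X : Type*}

/-- A categorical distribution on a finite set: positive everywhere and sums to 1. -/
def IsCatDist [Fintype X] (θ : X → ℝ) : Prop :=
  (∀ x, 0 < θ x) ∧ ∑ x, θ x = 1

/-- The tilt of order `α` of a categorical distribution. -/
noncomputable def tilt [Fintype X] (θ : X → ℝ) (α : ℝ) : X → ℝ :=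
  fun x => θ x ^ α / ∑ y, θ y ^ α

/-- Shannon entropy (natural log). -/
noncomputable def shannonEntropy [Fintype X] (ρ : X → ℝ) : ℝ :=
  ∑ x, ρ x * Real.log (1 / ρ x)

/-- Cross entropy `H(ρ‖θ)`. -/
noncomputable def crossEntropy [Fintype X] (ρ θ : X → ℝ) : ℝ :=
  ∑ x, ρ x * Real.log (1 / θ x)

/-- Relative entropy (KL divergence) `D(ρ‖θ)`. -/
noncomputable def relEntropy [Fintype X] (ρ θ : X → ℝ) : ℝ :=
  ∑ x, ρ x * Real.log (ρ x / θ x)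

/-- Rényi entropy of order `α`. -/
noncomputable def renyiEntropy [Fintype X] (θ : X → ℝ) (α : ℝ) : ℝ :=
  (1 / (1 - α)) * Real.log (∑ x, θ x ^ α)

/-- Varentropy. -/
noncomputable def varentropy [Fintype X] (ρ : X → ℝ) : ℝ :=
  ∑ x, ρ x * (Real.log (1 / ρ x) - shannonEntropy ρ) ^ 2

/-- Cross varentropy. -/
noncomputable def crossVarentropy [Fintype X] (ρ θ : X → ℝ) : ℝ :=
  ∑ x, ρ x * (Real.log (1 / θ x) - crossEntropy ρ θ) ^ 2

/-- Probability of an `n`-string under the i.i.d. extension of `θ`. -/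
noncomputable def strProb (θ : X → ℝ) {n : ℕ} (x : Fin n → X) : ℝ := ∏ i, θ (x i)

/-- Probability of a set of `n`-strings. -/
noncomputable def setProb [Fintype X] (θ : X → ℝ) {n : ℕ} (S : Finset (Fin n → X)) : ℝ :=
  ∑ x ∈ S, strProb θ x

/-- `θ` has a unique maximizer and a unique minimizer. -/
def UniqueExtremizers [Fintype X] (θ : X → ℝ) : Prop :=
  (∃! x : X, ∀ y, θ y ≤ θ x) ∧ (∃! x : X, ∀ y, θ x ≤ θ y)

/-- Tilted weakly typical set of order `α`. -/
noncomputable def typicalSetA [Fintype X] (θ : X → ℝ) (α : ℝ) (n : ℕ) (ε : ℝ) :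
    Finset (Fin n → X) :=
  Finset.univ.filter (fun x =>
    Real.exp (-(n : ℝ) * crossEntropy (tilt θ α) θ - n * ε) < strProb θ x ∧
    strProb θ x < Real.exp (-(n : ℝ) * crossEntropy (tilt θ α) θ + n * ε))

/-- The set `D^n_{θ,α,ε}`. -/
noncomputable def setD [Fintype X] (θ : X → ℝ) (α : ℝ) (n : ℕ) (ε : ℝ) :
    Finset (Fin n → X) :=
  Finset.univ.filter (fun x =>
    strProb (tilt θ α) x > Real.exp (-(n : ℝ) * shannonEntropy (tilt θ α) - n * |α| * ε))

/-- The set `E^n_{θ,α,ε}`. -/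
noncomputable def setE [Fintype X] (θ : X → ℝ) (α : ℝ) (n : ℕ) (ε : ℝ) :
    Finset (Fin n → X) :=
  Finset.univ.filter (fun x =>
    strProb (tilt θ α) x < Real.exp (-(n : ℝ) * shannonEntropy (tilt θ α) + n * |α| * ε))

/-- A guesswork function for `θ` on `n`-strings: a bijection onto `{1,…,|X|^n}`
that orders strings from most likely to least likely. -/
def IsGuesswork [Fintype X] (θ : X → ℝ) {n : ℕ} (G : (Fin n → X) → ℕ) : Prop :=
  Function.Injective G ∧
  (∀ x, G x ∈ Finset.Icc 1 (Fintype.card X ^ n)) ∧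
  (∀ m ∈ Finset.Icc 1 (Fintype.card X ^ n), ∃ x, G x = m) ∧
  (∀ x y, strProb θ x > strProb θ y → G x < G y)

lemma entropy_tilt_key [Fintype X] (θ : X → ℝ) (hθ : IsCatDist θ) (x₀ : X)
    (l : Filter ℝ)
    (h : ∀ y, y ≠ x₀ → Filter.Tendsto (fun α : ℝ => (θ y / θ x₀) ^ α) l (nhds 0)) :
    Filter.Tendsto (fun α : ℝ => shannonEntropy (tilt θ α)) l (nhds 0) := by
  obtain ⟨hpos, _⟩ := hθ
  set p : X → ℝ := fun x => if x = x₀ then 1 else 0 with hp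
  have hS : Filter.Tendsto (fun α : ℝ => ∑ y, (θ y / θ x₀) ^ α) l (nhds 1) := by
    have : Filter.Tendsto (fun α : ℝ => ∑ y, (θ y / θ x₀) ^ α) l (nhds (∑ y, p y)) := by
      refine tendsto_finset_sum _ (fun y _ => ?_)
      by_cases hy : y = x₀
      · subst hy
        simp only [hp, if_pos rfl]
        refine tendsto_const_nhds.congr (fun α => ?_)
        rw [div_self (hpos y).ne', Real.one_rpow]
      · simpa [hp, hy] using h y hy
    simpa [hp, Finset.sum_ite_eq' Finset.univ x₀] using this
  have htilt : ∀ x, Filter.Tendsto (fun α : ℝ => tilt θ α x) l (nhds (p x)) := by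
    intro x
    have heq : ∀ α : ℝ, tilt θ α x = (θ x / θ x₀) ^ α / ∑ y, (θ y / θ x₀) ^ α := by
      intro α
      have h0 : (0:ℝ) < θ x₀ ^ α := Real.rpow_pos_of_pos (hpos x₀) α
      have hs : (0:ℝ) < ∑ y, θ y ^ α :=
        Finset.sum_pos (fun y _ => Real.rpow_pos_of_pos (hpos y) α) ⟨x₀, Finset.mem_univ x₀⟩
      simp only [tilt, Real.div_rpow (hpos _).le (hpos x₀).le]
      rw [← Finset.sum_div]
      field_simp
    simp only [heq]
    have hx : Filter.Tendsto (fun α : ℝ => (θ x / θ x₀) ^ α) l (nhds (p x)) := by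
      by_cases hxx : x = x₀
      · subst hxx
        simp only [hp, if_pos rfl]
        refine tendsto_const_nhds.congr (fun α => ?_)
        rw [div_self (hpos x).ne', Real.one_rpow]
      · simpa [hp, hxx] using h x hxx
    simpa [Pi.div_def] using hx.div hS one_ne_zero
  have hH : ∀ α : ℝ, shannonEntropy (tilt θ α) =
      ∑ x, Real.negMulLog (tilt θ α x) := by
    intro α
    unfold shannonEntropy
    refine Finset.sum_congr rfl (fun x _ => ?_)
    rw [one_div, Real.log_inv, Real.negMulLog]
    ring
  simp only [hH]
  have : Filter.Tendsto (fun α : ℝ => ∑ x, Real.negMulLog (tilt θ α x)) l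
      (nhds (∑ x, Real.negMulLog (p x))) := by
    refine tendsto_finset_sum _ (fun x _ => ?_)
    exact (Real.continuous_negMulLog.continuousAt.tendsto).comp (htilt x)
  have hzero : (∑ x, Real.negMulLog (p x)) = 0 := by
    refine Finset.sum_eq_zero (fun x _ => ?_)
    by_cases hxx : x = x₀ <;> simp [hp, hxx, Real.negMulLog]
  rwa [hzero] at this

theorem entropy_tilt_tendsto_zero [Fintype X] [Nonempty X] (θ : X → ℝ)
    (hθ : IsCatDist θ) :
    ((∃! x : X, ∀ y, θ y ≤ θ x) →
      Filter.Tendsto (fun α : ℝ => shannonEntropy (tilt θ α)) Filter.atTop (nhds 0)) ∧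
    ((∃! x : X, ∀ y, θ x ≤ θ y) →
      Filter.Tendsto (fun α : ℝ => shannonEntropy (tilt θ α)) Filter.atBot (nhds 0)) := by
  obtain ⟨hpos, hsum⟩ := hθ
  constructor
  · rintro ⟨x₀, hmax, huniq⟩
    refine entropy_tilt_key θ ⟨hpos, hsum⟩ x₀ Filter.atTop (fun y hy => ?_)
    have hlt : θ y < θ x₀ := by
      rcases lt_or_eq_of_le (hmax y) with h | h
      · exact h
      · exact absurd (huniq y (fun z => h ▸ hmax z)) hy
    have hr : θ y / θ x₀ < 1 := (div_lt_one (hpos x₀)).2 hlt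
    have hr0 : 0 < θ y / θ x₀ := div_pos (hpos y) (hpos x₀)
    have hlog : Real.log (θ y / θ x₀) < 0 := Real.log_neg hr0 hr
    have := Real.tendsto_exp_atBot.comp
      (Filter.Tendsto.const_mul_atTop_of_neg hlog Filter.tendsto_id)
    refine this.congr (fun α => ?_)
    simp [Function.comp, Real.rpow_def_of_pos hr0]
  · rintro ⟨x₀, hmin, huniq⟩
    refine entropy_tilt_key θ ⟨hpos, hsum⟩ x₀ Filter.atBot (fun y hy => ?_)
    have hlt : θ x₀ < θ y := by
      rcases lt_or_eq_of_le (hmin y) with h | h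
      · exact h
      · exact absurd (huniq y (fun z => h ▸ hmin z)) hy
    have hr : 1 < θ y / θ x₀ := (one_lt_div (hpos x₀)).2 hlt
    have hr0 : 0 < θ y / θ x₀ := div_pos (hpos y) (hpos x₀)
    have hlog : 0 < Real.log (θ y / θ x₀) := Real.log_pos hr
    have := Real.tendsto_exp_atBot.comp
      (Filter.Tendsto.const_mul_atBot hlog Filter.tendsto_id)
    refine this.congr (fun α => ?_)
    simp [Function.comp, Real.rpow_def_of_pos hr0]
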